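/- Let S and R be two ⇝-connected sub-graphs of a locally colored graph G that have at least one vertex in common. Then the sub-graph S ∪ R is ⇝-connected. -/
import Mathlib


/-- A finite undirected multigraph without loops: each edge is incident to
exactly two distinct endpoints. -/
structure Multigraph (V : Type) (E : Type) where
  inc : E → V → Prop
  exists_two : ∀ e : E, ∃ a b : V, a ≠ b ∧ ∀ w : V, inc e w ↔ (w = a ∨ w = b)

namespace Multigraph

variable {V E C : Type}

/-- A path (walk) in a multigraph: an alternating sequence of vertices and
edges such that the endpoints of the `i`-th edge are exactly the `i`-th and
`(i+1)`-th vertices. -/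
structure Walk (G : Multigraph V E) where
  len : ℕ
  vert : Fin (len + 1) → V
  edge : Fin len → E
  incs : ∀ (i : ℕ) (h : i < len), ∀ w : V,
    G.inc (edge ⟨i, h⟩) w ↔ (w = vert ⟨i, by omega⟩ ∨ w = vert ⟨i + 1, by omega⟩)

variable {G : Multigraph V E}

namespace Walk

/-- The source (first vertex) of a path. -/
def src (p : G.Walk) : V := p.vert ⟨0, by omega⟩

/-- The target (last vertex) of a path. -/
def tgt (p : G.Walk) : V := p.vert ⟨p.len, by omega⟩

def IsClosed (p : G.Walk) : Prop := p.src = p.tgt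

def IsOpen (p : G.Walk) : Prop := p.src ≠ p.tgt

/-- A path is simple when its edges are pairwise distinct and its vertices are
pairwise distinct, except that its two endpoints may coincide. -/
def IsSimple (p : G.Walk) : Prop :=
  (∀ (i j : ℕ) (hi : i < p.len) (hj : j < p.len),
      p.edge ⟨i, hi⟩ = p.edge ⟨j, hj⟩ → i = j) ∧
  (∀ (i j : ℕ) (hi : i < p.len + 1) (hj : j < p.len + 1), i < j →
      p.vert ⟨i, hi⟩ = p.vert ⟨j, hj⟩ → i = 0 ∧ j = p.len)

/-- A cycle is a non-empty simple closed path. -/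
def IsCycle (p : G.Walk) : Prop := p.IsSimple ∧ p.IsClosed ∧ 0 < p.len

/-- `x` occurs as a vertex of `p`. -/
def MemV (p : G.Walk) (x : V) : Prop := ∃ (i : ℕ) (h : i < p.len + 1), p.vert ⟨i, h⟩ = x

/-- `e` occurs as an edge of `p`. -/
def MemE (p : G.Walk) (e : E) : Prop := ∃ (i : ℕ) (h : i < p.len), p.edge ⟨i, h⟩ = e

/-- With respect to a local coloring `c`, the path `p` has a cusp at
vertex-position `j`, at vertex `u`, with color `α`: either an internal cusp
(two consecutive distinct edges with the same color at their middle vertex),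
or -- when `j = 0` and `p` is closed -- the cusp formed by its last edge, its
source and its first edge. -/
def CuspAt (c : E → V → C) (p : G.Walk) (j : ℕ) (u : V) (α : C) : Prop :=
  (∃ (h1 : 0 < j) (h2 : j < p.len),
      p.vert ⟨j, by omega⟩ = u ∧
      p.edge ⟨j - 1, by omega⟩ ≠ p.edge ⟨j, h2⟩ ∧
      c (p.edge ⟨j - 1, by omega⟩) u = α ∧ c (p.edge ⟨j, h2⟩) u = α) ∨
  (j = 0 ∧ p.IsClosed ∧ p.src = u ∧
    ∃ h : 0 < p.len,
      p.edge ⟨p.len - 1, by omega⟩ ≠ p.edge ⟨0, h⟩ ∧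
      c (p.edge ⟨p.len - 1, by omega⟩) u = α ∧ c (p.edge ⟨0, h⟩) u = α)

/-- `p` has a cusp at vertex-position `j`. -/
def CuspIdx (c : E → V → C) (p : G.Walk) (j : ℕ) : Prop := ∃ u α, p.CuspAt c j u α

/-- `p` has a cusp whose vertex is `u`. -/
def HasCuspAtV (c : E → V → C) (p : G.Walk) (u : V) : Prop := ∃ j α, p.CuspAt c j u α

/-- A cusp-free (alternating) path. -/
def CuspFree (c : E → V → C) (p : G.Walk) : Prop := ∀ j : ℕ, ¬ p.CuspIdx c j

/-- The number of cusps of a path. -/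
noncomputable def cuspCount (c : E → V → C) (p : G.Walk) : ℕ :=
  {j : ℕ | p.CuspIdx c j}.ncard

/-- The starting color of `p` is not `α`. -/
def StartColorNe (c : E → V → C) (p : G.Walk) (α : C) : Prop :=
  ∀ h : 0 < p.len, c (p.edge ⟨0, h⟩) p.src ≠ α

/-- `p` is non-empty and its ending color is `β`. -/
def EndColorIs (c : E → V → C) (p : G.Walk) (β : C) : Prop :=
  ∃ h : 0 < p.len, c (p.edge ⟨p.len - 1, by omega⟩) p.tgt = β

/-- `q` is a (contiguous) sub-path of `p`. -/
def IsSubpathOf (q p : G.Walk) : Prop :=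
  ∃ (k : ℕ) (hk : k + q.len ≤ p.len),
    (∀ (i : ℕ) (hi : i < q.len + 1), q.vert ⟨i, hi⟩ = p.vert ⟨k + i, by omega⟩) ∧
    (∀ (i : ℕ) (hi : i < q.len), q.edge ⟨i, hi⟩ = p.edge ⟨k + i, by omega⟩)

/-- `r` is the path `p` extended (at its end) by the edge `e` to the vertex `l`;
that is, `r = p · (tgt p, e, l)`. -/
def ExtendsBy (r p : G.Walk) (e : E) (l : V) : Prop :=
  ∃ hlen : r.len = p.len + 1,
    (∀ (i : ℕ) (hi : i < p.len + 1), r.vert ⟨i, by omega⟩ = p.vert ⟨i, hi⟩) ∧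
    (∀ (i : ℕ) (hi : i < p.len), r.edge ⟨i, by omega⟩ = p.edge ⟨i, hi⟩) ∧
    r.edge ⟨p.len, by omega⟩ = e ∧ r.vert ⟨p.len + 1, by omega⟩ = l

/-- `r` is the path obtained by prefixing `p` with the edge `e`;
that is, `r = (src r, e, src p) · p`. -/
def ConsOf (r : G.Walk) (e : E) (p : G.Walk) : Prop :=
  ∃ hlen : r.len = p.len + 1,
    r.edge ⟨0, by omega⟩ = e ∧
    (∀ (i : ℕ) (hi : i < p.len + 1), r.vert ⟨i + 1, by omega⟩ = p.vert ⟨i, hi⟩) ∧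
    (∀ (i : ℕ) (hi : i < p.len), r.edge ⟨i + 1, by omega⟩ = p.edge ⟨i, hi⟩)

end Walk

/-- `(v, α)` is a cusp-point: two distinct edges incident to `v` both have
color `α` at `v`. -/
def IsCuspPoint (G : Multigraph V E) (c : E → V → C) (v : V) (α : C) : Prop :=
  ∃ e f : E, e ≠ f ∧ G.inc e v ∧ G.inc f v ∧ c e v = α ∧ c f v = α

/-- `(v, α) ⇝_p (u, β)`: `p` is a simple open cusp-free path from `v` to `u`
whose starting color is not `α` and whose ending color is `β`. -/
def StepsTo (G : Multigraph V E) (c : E → V → C) (v : V) (α : C) (u : V) (β : C)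
    (p : G.Walk) : Prop :=
  p.IsSimple ∧ p.IsOpen ∧ p.CuspFree c ∧ p.src = v ∧ p.tgt = u ∧
    p.StartColorNe c α ∧ p.EndColorIs c β

/-- `(v, α) ⇝ (u, β)`. -/
def Steps (G : Multigraph V E) (c : E → V → C) (v : V) (α : C) (u : V) (β : C) : Prop :=
  ∃ p : G.Walk, G.StepsTo c v α u β p

/-- `(v, α) ⊳_p (u, β)`: `(v, α) ⇝_p (u, β)` and no `⇝`-path from `(u, β)`
ends on a vertex of `p`. -/
def TriPath (G : Multigraph V E) (c : E → V → C) (v : V) (α : C) (u : V) (β : C)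
    (p : G.Walk) : Prop :=
  G.StepsTo c v α u β p ∧
    ∀ (x : V) (τ : C) (q : G.Walk), G.StepsTo c u β x τ q → ¬ p.MemV x

/-- `(v, α) ⊳ (u, β)`. -/
def Tri (G : Multigraph V E) (c : E → V → C) (v : V) (α : C) (u : V) (β : C) : Prop :=
  ∃ p : G.Walk, G.TriPath c v α u β p

/-- A splitting vertex: every cycle containing `v` has a cusp at `v`. -/
def IsSplitting (G : Multigraph V E) (c : E → V → C) (v : V) : Prop :=
  ∀ ω : G.Walk, ω.IsCycle → ω.MemV v → ω.HasCuspAtV c v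

/-- A set `P` of vertex-color pairs dominates cusp-points. -/
def Dominates (G : Multigraph V E) (c : E → V → C) (P : Set (V × C)) : Prop :=
  ∀ (v : V) (α : C), G.IsCuspPoint c v α →
    (v, α) ∈ P ∨ ∃ (u : V) (β : C), (u, β) ∈ P ∧ G.Tri c v α u β

/-- `𝔐(v)`: the set of cycles with source `v`, whose last and first edges do
not make a cusp at `v`, with a minimal number of cusps among such cycles. -/
def MinCycles (G : Multigraph V E) (c : E → V → C) (v : V) : Set G.Walk :=
  {ω | ω.IsCycle ∧ ω.src = v ∧ ¬ ω.CuspIdx c 0 ∧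
    ∀ ω' : G.Walk, ω'.IsCycle → ω'.src = v → ¬ ω'.CuspIdx c 0 →
      ω.cuspCount c ≤ ω'.cuspCount c}

/-- The one-edge path `(v, e, u)`. -/
def singleWalk (G : Multigraph V E) (e : E) (v u : V)
    (hends : ∀ w : V, G.inc e w ↔ w = v ∨ w = u) : G.Walk where
  len := 1
  vert := fun i => if (i : ℕ) = 0 then v else u
  edge := fun _ => e
  incs := by
    intro i h w
    have hi : i = 0 := by omega
    subst hi
    simpa using hends w

/-- An alternating cycle with respect to an edge-coloring: a cycle whose
consecutive edges (including last and first) have different colors. -/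
def Walk.IsAlternatingCycle (c : E → C) (p : G.Walk) : Prop :=
  p.IsCycle ∧
  (∀ (i : ℕ) (h : i + 1 < p.len), c (p.edge ⟨i, by omega⟩) ≠ c (p.edge ⟨i + 1, h⟩)) ∧
  (∀ h : 0 < p.len, c (p.edge ⟨p.len - 1, by omega⟩) ≠ c (p.edge ⟨0, h⟩))

/-- `a` and `b` are connected in `G − v` (by a path avoiding `v`). -/
def ReachAvoiding (G : Multigraph V E) (v a b : V) : Prop :=
  ∃ p : G.Walk, p.src = a ∧ p.tgt = b ∧
    ∀ (i : ℕ) (h : i < p.len + 1), p.vert ⟨i, h⟩ ≠ v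

/-- A perfect matching: every vertex is incident to exactly one edge of `F`. -/
def IsPerfectMatching (G : Multigraph V E) (F : Set E) : Prop :=
  ∀ v : V, ∃! e : E, e ∈ F ∧ G.inc e v

/-- A bridge: an edge contained in no cycle. -/
def IsBridge (G : Multigraph V E) (e : E) : Prop :=
  ¬ ∃ ω : G.Walk, ω.IsCycle ∧ ω.MemE e

/-- A `φ`-conformal cycle: a cycle `ω` such that `φ x` is an edge of `ω`
for every vertex `x` of `ω`. -/
def ConformalCycle (G : Multigraph V E) (φ : V → E) (ω : G.Walk) : Prop :=
  ω.IsCycle ∧ ∀ x : V, ω.MemV x → ω.MemE (φ x)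

/-- A sub-graph: sets of vertices and edges, each edge having its endpoints
among the vertices. -/
structure Subgraph (G : Multigraph V E) where
  verts : Set V
  edges : Set E
  edge_mem : ∀ e ∈ edges, ∀ w : V, G.inc e w → w ∈ verts

/-- The walk `p` lies inside the sub-graph `S`. -/
def Walk.InSub (p : G.Walk) (S : G.Subgraph) : Prop :=
  (∀ (i : ℕ) (h : i < p.len + 1), p.vert ⟨i, h⟩ ∈ S.verts) ∧
  (∀ (i : ℕ) (h : i < p.len), p.edge ⟨i, h⟩ ∈ S.edges)

/-- `S` is `⇝`-connected: any two distinct vertices of `S` are related by `⇝`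
along a path inside `S`, for any starting color constraint. -/
def Subgraph.StepConnected (c : E → V → C) (S : G.Subgraph) : Prop :=
  ∀ v ∈ S.verts, ∀ u ∈ S.verts, v ≠ u → ∀ α : C,
    ∃ (p : G.Walk) (β : C), p.InSub S ∧ G.StepsTo c v α u β p

/-- `S` is connected: non-empty, and any two of its vertices are joined by a
path lying inside it. -/
def Subgraph.IsConnected (S : G.Subgraph) : Prop :=
  (S.verts.Nonempty ∨ S.edges.Nonempty) ∧
  ∀ a ∈ S.verts, ∀ b ∈ S.verts,
    ∃ p : G.Walk, p.InSub S ∧ p.src = a ∧ p.tgt = b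

/-- The sub-graph consisting of the vertices and edges of a walk. -/
def Walk.toSub (p : G.Walk) : G.Subgraph where
  verts := {x | p.MemV x}
  edges := {e | p.MemE e}
  edge_mem := by
    rintro e ⟨i, h, rfl⟩ w hw
    rw [p.incs i h w] at hw
    rcases hw with h' | h'
    · exact ⟨i, by omega, h'.symm⟩
    · exact ⟨i + 1, by omega, h'.symm⟩

/-- Union of sub-graphs. -/
def Subgraph.union (S R : G.Subgraph) : G.Subgraph where
  verts := S.verts ∪ R.verts
  edges := S.edges ∪ R.edges
  edge_mem := by
    rintro e (he | he) w hw
    · exact Or.inl (S.edge_mem e he w hw)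
    · exact Or.inr (R.edge_mem e he w hw)

/-- Inclusion of sub-graphs. -/
def Subgraph.le (S T : G.Subgraph) : Prop := S.verts ⊆ T.verts ∧ S.edges ⊆ T.edges

/-- `S` is a union of cusp-free cycles. -/
def IsCuspFreeCycleUnion (G : Multigraph V E) (c : E → V → C) (S : G.Subgraph) : Prop :=
  ∃ F : Set G.Walk, (∀ ω ∈ F, Walk.IsCycle ω ∧ Walk.CuspFree c ω) ∧
    S.verts = {x | ∃ ω ∈ F, Walk.MemV ω x} ∧
    S.edges = {e | ∃ ω ∈ F, Walk.MemE ω e}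

/-- `𝕺`: the set of maximal connected unions of cusp-free cycles. -/
def MaxCFCU (G : Multigraph V E) (c : E → V → C) : Set (G.Subgraph) :=
  {S | G.IsCuspFreeCycleUnion c S ∧ S.IsConnected ∧
    ∀ T : G.Subgraph, G.IsCuspFreeCycleUnion c T → T.IsConnected → S.le T → T.le S}

end Multigraph

/-- A finite directed loopless multigraph. -/
structure DirMultigraph (V : Type) (E : Type) where
  srcE : E → V
  tgtE : E → V
  ne : ∀ e : E, srcE e ≠ tgtE e

/-- The underlying undirected multigraph of a directed multigraph. -/
def DirMultigraph.toMultigraph {V E : Type} (D : DirMultigraph V E) : Multigraph V E where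
  inc e w := w = D.srcE e ∨ w = D.tgtE e
  exists_two e := ⟨D.srcE e, D.tgtE e, D.ne e, fun _ => Iff.rfl⟩

/-- `v` is a turning vertex of the cycle `ω`: the two edges incident to `v`
in `ω` either both have source `v` or both have target `v`. -/
def DirMultigraph.TurningAt {V E : Type} (D : DirMultigraph V E)
    (ω : D.toMultigraph.Walk) (v : V) : Prop :=
  (∃ (j : ℕ) (h1 : 0 < j) (h2 : j < ω.len),
      ω.vert ⟨j, by omega⟩ = v ∧
      ((D.srcE (ω.edge ⟨j - 1, by omega⟩) = v ∧ D.srcE (ω.edge ⟨j, h2⟩) = v) ∨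
       (D.tgtE (ω.edge ⟨j - 1, by omega⟩) = v ∧ D.tgtE (ω.edge ⟨j, h2⟩) = v))) ∨
  (Multigraph.Walk.IsClosed ω ∧ Multigraph.Walk.src ω = v ∧
    ∃ h : 0 < ω.len,
      ((D.srcE (ω.edge ⟨ω.len - 1, by omega⟩) = v ∧ D.srcE (ω.edge ⟨0, h⟩) = v) ∨
       (D.tgtE (ω.edge ⟨ω.len - 1, by omega⟩) = v ∧ D.tgtE (ω.edge ⟨0, h⟩) = v)))

namespace Multigraph

section Aux

variable {V E C : Type} {G : Multigraph V E}

lemma Walk.vert_congr (p : G.Walk) {a b : ℕ} (ha : a < p.len + 1) (hb : b < p.len + 1)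
    (h : a = b) : p.vert ⟨a, ha⟩ = p.vert ⟨b, hb⟩ := by subst h; rfl

lemma Walk.edge_congr (p : G.Walk) {a b : ℕ} (ha : a < p.len) (hb : b < p.len)
    (h : a = b) : p.edge ⟨a, ha⟩ = p.edge ⟨b, hb⟩ := by subst h; rfl

lemma Walk.vert_injective {p : G.Walk} (hs : p.IsSimple) (ho : p.IsOpen) :
    ∀ (i j : ℕ) (hi : i < p.len + 1) (hj : j < p.len + 1),
      p.vert ⟨i, hi⟩ = p.vert ⟨j, hj⟩ → i = j := by
  have key : ∀ (i j : ℕ) (hi : i < p.len + 1) (hj : j < p.len + 1), i < j →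
      p.vert ⟨i, hi⟩ = p.vert ⟨j, hj⟩ → False := by
    intro i j hi hj hij h
    obtain ⟨h0, hl⟩ := hs.2 i j hi hj hij h
    subst h0; subst hl
    exact ho h
  intro i j hi hj h
  rcases lt_trichotomy i j with hij | hij | hij
  · exact absurd h (fun h => key i j hi hj hij h)
  · exact hij
  · exact absurd h.symm (fun h => key j i hj hi hij h)

/-- Glue the length-`m` prefix of `p` with `q`, when the `m`-th vertex of `p`
is the source of `q`. -/
def Walk.glue (p q : G.Walk) (m : ℕ) (hm : m ≤ p.len)
    (hj : p.vert ⟨m, by omega⟩ = q.src) : G.Walk where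
  len := m + q.len
  vert i := if _ : (i : ℕ) < m then p.vert ⟨i, by omega⟩
    else q.vert ⟨(i : ℕ) - m, by omega⟩
  edge i := if _ : (i : ℕ) < m then p.edge ⟨i, by omega⟩
    else q.edge ⟨(i : ℕ) - m, by omega⟩
  incs := by
    intro i h w
    dsimp only
    by_cases h' : i < m
    · rw [dif_pos h', dif_pos h']
      by_cases h'' : i + 1 < m
      · rw [dif_pos h'']
        exact p.incs i (by omega) w
      · rw [dif_neg h'']
        have hi1 : i + 1 = m := by omega
        have hv : q.vert ⟨i + 1 - m, by omega⟩ = p.vert ⟨i + 1, by omega⟩ := by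
          rw [q.vert_congr _ (by omega) (show i + 1 - m = 0 by omega)]
          rw [show q.vert ⟨0, by omega⟩ = q.src from rfl, ← hj]
          exact p.vert_congr _ _ hi1.symm
        rw [hv]
        exact p.incs i (by omega) w
    · rw [dif_neg h', dif_neg h', dif_neg (show ¬ i + 1 < m by omega)]
      have hv : q.vert ⟨i + 1 - m, by omega⟩ = q.vert ⟨i - m + 1, by omega⟩ :=
        q.vert_congr _ _ (by omega)
      rw [hv]
      exact q.incs (i - m) (by omega) w

/-- The key composition lemma: a `⇝`-path from `v` inside `A` reaching `B`,
cut at the first `B`-vertex and continued inside `B`, yields a `⇝`-path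
inside `A ∪ B`. -/
theorem key_glue (c : E → V → C) (A B : G.Subgraph)
    (hA : A.StepConnected c) (hB : B.StepConnected c)
    (x : V) (hxA : x ∈ A.verts) (hxB : x ∈ B.verts)
    (v u : V) (hvA : v ∈ A.verts) (hvB : v ∉ B.verts)
    (huB : u ∈ B.verts) (huA : u ∉ A.verts) (α : C) :
    ∃ (w : G.Walk) (β : C), w.InSub (A.union B) ∧ G.StepsTo c v α u β w := by
  classical
  have hvx : v ≠ x := fun h => hvB (h ▸ hxB)
  obtain ⟨p, βp, hpIn, hpSimple, hpOpen, hpCF, hpsrc, hptgt, hpStart, hpEnd⟩ :=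
    hA v hvA x hxA hvx α
  -- m : first index of p whose vertex is in B
  have hex : ∃ i : ℕ, ∃ h : i < p.len + 1, p.vert ⟨i, h⟩ ∈ B.verts :=
    ⟨p.len, by omega, by
      rw [show p.vert ⟨p.len, by omega⟩ = p.tgt from rfl, hptgt]; exact hxB⟩
  let m := Nat.find hex
  obtain ⟨hmlt, hmB⟩ : ∃ h : m < p.len + 1, p.vert ⟨m, h⟩ ∈ B.verts := Nat.find_spec hex
  have hmle : m ≤ p.len := by omega
  have hmin : ∀ i, i < m → ∀ h : i < p.len + 1, p.vert ⟨i, h⟩ ∉ B.verts := by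
    intro i hi h hmem
    exact Nat.find_min hex hi ⟨h, hmem⟩
  have hm1 : 0 < m := by
    rcases Nat.eq_zero_or_pos m with h0 | h
    · exfalso
      apply hvB
      have hv0 : p.vert ⟨m, hmlt⟩ = v := by
        rw [p.vert_congr _ (by omega) h0]
        exact hpsrc
      rw [← hv0]; exact hmB
    · exact h
  set y : V := p.vert ⟨m, hmlt⟩ with hy
  have hyA : y ∈ A.verts := hpIn.1 m hmlt
  have hyu : y ≠ u := fun h => huA (h ▸ hyA)
  set α' : C := c (p.edge ⟨m - 1, by omega⟩) y with hα'
  obtain ⟨q, γ, hqIn, hqSimple, hqOpen, hqCF, hqsrc, hqtgt, hqStart, hqEnd⟩ :=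
    hB y hmB u huB hyu α'
  obtain ⟨hq0, hqEnd'⟩ := hqEnd
  have hglue : p.vert ⟨m, by omega⟩ = q.src := hqsrc.symm
  refine ⟨p.glue q m hmle hglue, γ, ?_⟩
  set w : G.Walk := p.glue q m hmle hglue with hw
  have hwlen : w.len = m + q.len := rfl
  have wv : ∀ (i : ℕ) (h : i < w.len + 1),
      w.vert ⟨i, h⟩ = if h' : i < m then p.vert ⟨i, by omega⟩
        else q.vert ⟨i - m, by omega⟩ := fun i h => rfl
  have we : ∀ (i : ℕ) (h : i < w.len),
      w.edge ⟨i, h⟩ = if h' : i < m then p.edge ⟨i, by omega⟩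
        else q.edge ⟨i - m, by omega⟩ := fun i h => rfl
  have hqvB : ∀ (j : ℕ) (hj : j < q.len + 1), q.vert ⟨j, hj⟩ ∈ B.verts := hqIn.1
  have wsrc : w.src = v := by
    rw [show w.src = w.vert ⟨0, by omega⟩ from rfl, wv 0 (by omega), dif_pos hm1]
    exact hpsrc
  have wtgt : w.tgt = u := by
    rw [show w.tgt = w.vert ⟨w.len, by omega⟩ from rfl, wv w.len (by omega),
      dif_neg (show ¬ w.len < m by omega)]
    rw [q.vert_congr _ (by omega) (show w.len - m = q.len by omega)]
    exact hqtgt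
  have hvu : v ≠ u := fun h => hvB (h ▸ huB)
  -- edge disjointness
  have hedis : ∀ (i : ℕ) (hi : i < m) (j : ℕ) (hj : j < q.len),
      p.edge ⟨i, by omega⟩ ≠ q.edge ⟨j, hj⟩ := by
    intro i hi j hj he
    apply hmin i hi (by omega)
    apply B.edge_mem _ (hqIn.2 j hj)
    rw [← he]
    exact (p.incs i (by omega) _).mpr (Or.inl rfl)
  refine ⟨?_, ?_, ?_, ?_, wsrc, wtgt, ?_, ?_⟩
  -- InSub
  · constructor
    · intro i h
      rw [wv i h]
      by_cases h' : i < m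
      · rw [dif_pos h']
        exact Or.inl (hpIn.1 i (by omega))
      · rw [dif_neg h']
        exact Or.inr (hqvB (i - m) (by omega))
    · intro i h
      rw [we i h]
      by_cases h' : i < m
      · rw [dif_pos h']
        exact Or.inl (hpIn.2 i (by omega))
      · rw [dif_neg h']
        exact Or.inr (hqIn.2 (i - m) (by omega))
  -- IsSimple
  · constructor
    · intro i j hi hj heq
      rw [we i hi, we j hj] at heq
      by_cases h1 : i < m <;> by_cases h2 : j < m
      · rw [dif_pos h1, dif_pos h2] at heq
        exact hpSimple.1 i j (by omega) (by omega) heq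
      · rw [dif_pos h1, dif_neg h2] at heq
        exact absurd heq (hedis i h1 (j - m) (by omega))
      · rw [dif_neg h1, dif_pos h2] at heq
        exact absurd heq.symm (hedis j h2 (i - m) (by omega))
      · rw [dif_neg h1, dif_neg h2] at heq
        have := hqSimple.1 (i - m) (j - m) (by omega) (by omega) heq
        omega
    · intro i j hi hj hij heq
      exfalso
      rw [wv i hi, wv j hj] at heq
      by_cases h1 : i < m <;> by_cases h2 : j < m
      · rw [dif_pos h1, dif_pos h2] at heq
        have := Walk.vert_injective hpSimple hpOpen i j (by omega) (by omega) heq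
        omega
      · rw [dif_pos h1, dif_neg h2] at heq
        exact hmin i h1 (by omega) (heq ▸ hqvB (j - m) (by omega))
      · omega
      · rw [dif_neg h1, dif_neg h2] at heq
        have := Walk.vert_injective hqSimple hqOpen (i - m) (j - m)
          (by omega) (by omega) heq
        omega
  -- IsOpen
  · show w.src ≠ w.tgt
    rw [wsrc, wtgt]
    exact hvu
  -- CuspFree
  · intro j hcusp
    obtain ⟨u₀, α₀, hc⟩ := hcusp
    rcases hc with ⟨h1, h2, hvj, hne, hc1, hc2⟩ | ⟨hj0, hcl, hrest⟩
    · by_cases hjm : j < m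
      · -- cusp inside p
        rw [we (j - 1) (by omega), dif_pos (show j - 1 < m by omega)] at hc1 hne
        rw [we j (by omega), dif_pos hjm] at hc2 hne
        rw [wv j (by omega), dif_pos hjm] at hvj
        exact hpCF j ⟨u₀, α₀, Or.inl ⟨h1, by omega, hvj, hne, hc1, hc2⟩⟩
      · by_cases hjm' : j = m
        · -- cusp at the junction
          rw [we (j - 1) (by omega), dif_pos (show j - 1 < m by omega)] at hc1
          rw [p.edge_congr _ (by omega) (show j - 1 = m - 1 by omega)] at hc1
          rw [we j (by omega), dif_neg (show ¬ j < m by omega)] at hc2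
          rw [wv j (by omega), dif_neg (show ¬ j < m by omega)] at hvj
          rw [q.vert_congr _ (by omega) (show j - m = 0 by omega)] at hvj
          have hvy : u₀ = y := by
            rw [← hvj]
            exact hqsrc.symm ▸ rfl
          apply hqStart (by omega)
          rw [q.edge_congr _ (by omega) (show j - m = 0 by omega)] at hc2
          rw [hqsrc, ← hvy, hc2, ← hc1, hα', hvy]
        · -- cusp inside q
          have hjm2 : m < j := by omega
          rw [we (j - 1) (by omega), dif_neg (show ¬ j - 1 < m by omega)] at hc1 hne
          rw [we j (by omega), dif_neg (show ¬ j < m by omega)] at hc2 hne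
          rw [wv j (by omega), dif_neg (show ¬ j < m by omega)] at hvj
          rw [q.edge_congr _ (by omega) (show j - 1 - m = j - m - 1 by omega)] at hc1 hne
          refine hqCF (j - m) ⟨u₀, α₀, Or.inl ⟨by omega, by omega, hvj, hne, hc1, hc2⟩⟩
    · -- closed-cusp case: impossible since w is open
      have : v = u := by rw [← wsrc, ← wtgt]; exact hcl
      exact hvu this
  -- StartColorNe
  · intro h
    rw [we 0 h, dif_pos hm1, wsrc]
    rw [← hpsrc]
    exact hpStart (by omega)
  -- EndColorIs
  · refine ⟨by omega, ?_⟩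
    rw [we (w.len - 1) (by omega), dif_neg (show ¬ w.len - 1 < m by omega)]
    rw [q.edge_congr _ (by omega) (show w.len - 1 - m = q.len - 1 by omega)]
    rw [wtgt, ← hqtgt]
    exact hqEnd'

end Aux

end Multigraph

open Multigraph in
/-- The union of two `⇝`-connected sub-graphs sharing a vertex is
`⇝`-connected. -/
theorem union_stepConnected
    {V E C : Type} [Fintype V] [Fintype E] [Fintype C]
    (G : Multigraph V E) (c : E → V → C)
    (S R : G.Subgraph)
    (hS : S.StepConnected c) (hR : R.StepConnected c)
    (hmeet : ∃ x : V, x ∈ S.verts ∧ x ∈ R.verts) :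
    (S.union R).StepConnected c := by
  intro v hv u hu hvu α
  obtain ⟨x, hxS, hxR⟩ := hmeet
  rcases hv with hvS | hvR
  · by_cases huS : u ∈ S.verts
    · obtain ⟨p, β, hin, hst⟩ := hS v hvS u huS hvu α
      exact ⟨p, β, ⟨fun i h => Or.inl (hin.1 i h), fun i h => Or.inl (hin.2 i h)⟩, hst⟩
    · have huR : u ∈ R.verts := by
        rcases hu with h | h
        · exact absurd h huS
        · exact h
      by_cases hvR : v ∈ R.verts
      · obtain ⟨p, β, hin, hst⟩ := hR v hvR u huR hvu α
        exact ⟨p, β, ⟨fun i h => Or.inr (hin.1 i h), fun i h => Or.inr (hin.2 i h)⟩, hst⟩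
      · obtain ⟨w, β, hin, hst⟩ := key_glue c S R hS hR x hxS hxR v u hvS hvR huR huS α
        exact ⟨w, β, hin, hst⟩
  · by_cases huR : u ∈ R.verts
    · obtain ⟨p, β, hin, hst⟩ := hR v hvR u huR hvu α
      exact ⟨p, β, ⟨fun i h => Or.inr (hin.1 i h), fun i h => Or.inr (hin.2 i h)⟩, hst⟩
    · have huS : u ∈ S.verts := by
        rcases hu with h | h
        · exact h
        · exact absurd h huR
      by_cases hvS : v ∈ S.verts
      · obtain ⟨p, β, hin, hst⟩ := hS v hvS u huS hvu α
        exact ⟨p, β, ⟨fun i h => Or.inl (hin.1 i h), fun i h => Or.inl (hin.2 i h)⟩, hst⟩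
      · obtain ⟨w, β, hin, hst⟩ := key_glue c R S hR hS x hxR hxS v u hvR hvS huS huR α
        refine ⟨w, β, ⟨fun i h => ?_, fun i h => ?_⟩, hst⟩
        · exact (hin.1 i h).elim Or.inr Or.inl
        · exact (hin.2 i h).elim Or.inr Or.inl
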